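/- Let M be a monoidal category, C a category, (Tr, τ) a categorified trace from M to C, and let x be an object of M with a right dual xᘁ (with evaluation ev_x : xᘁ ⊗ x ⟶ 𝟙 and coevaluation coev_x : 𝟙 ⟶ x ⊗ xᘁ satisfying the zig-zag identities). Then for every object y of M one has τ_{y,xᘁ} = Tr(id_{xᘁ⊗y} ⊗ ev_x) ∘ τ⁻_{x, xᘁ⊗y⊗xᘁ} ∘ Tr(coev_x ⊗ id_{y⊗xᘁ}) as morphisms Tr(y ⊗ xᘁ) ⟶ Tr(xᘁ ⊗ y), where the unitor y⊗xᘁ ≅ 𝟙⊗(y⊗xᘁ), the associators regrouping ((x⊗xᘁ)⊗(y⊗xᘁ)) as x⊗(xᘁ⊗y⊗xᘁ) and (xᘁ⊗y⊗xᘁ)⊗x as (xᘁ⊗y)⊗(xᘁ⊗x), and the unitor (xᘁ⊗y)⊗𝟙 ≅ xᘁ⊗y are inserted where needed. -/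

import Mathlib

open CategoryTheory MonoidalCategory

/-- A categorified trace from a monoidal category `M` to a category `C`: a functor
`Tr : M ⥤ C` together with natural isomorphisms (traciators)
`τ x y : Tr (x ⊗ y) ≅ Tr (y ⊗ x)` satisfying the traciator axiom
`τ_{x, y ⊗ z} = τ_{z ⊗ x, y} ∘ τ_{x ⊗ y, z}` (with associators inserted). -/
structure CategorifiedTrace (M : Type*) [Category M] [MonoidalCategory M]
    (C : Type*) [Category C] where
  /-- the underlying trace functor -/
  Tr : M ⥤ C
  /-- the traciators -/
  τ : ∀ x y : M, Tr.obj (x ⊗ y) ≅ Tr.obj (y ⊗ x)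
  /-- naturality of the traciators -/
  naturality : ∀ {x x' y y' : M} (f : x ⟶ x') (g : y ⟶ y'),
    Tr.map (f ⊗ₘ g) ≫ (τ x' y').hom = (τ x y).hom ≫ Tr.map (g ⊗ₘ f)
  /-- the traciator axiom `τ_{x, y ⊗ z} = τ_{z ⊗ x, y} ∘ τ_{x ⊗ y, z}` -/
  traciator : ∀ x y z : M,
    Tr.map (α_ x y z).hom ≫ (τ x (y ⊗ z)).hom ≫ Tr.map (α_ y z x).hom =
      (τ (x ⊗ y) z).hom ≫ Tr.map (α_ z x y).inv ≫ (τ (z ⊗ x) y).hom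

set_option maxHeartbeats 1000000

namespace CategorifiedTrace

variable {M : Type*} [Category M] [MonoidalCategory M] {C : Type*} [Category C]

lemma naturality_inv (T : CategorifiedTrace M C) {x x' y y' : M} (f : x ⟶ x') (g : y ⟶ y') :
    T.Tr.map (g ⊗ₘ f) ≫ (T.τ x' y').inv = (T.τ x y).inv ≫ T.Tr.map (f ⊗ₘ g) := by
  rw [Iso.comp_inv_eq, Category.assoc, Iso.eq_inv_comp]
  exact (T.naturality f g).symm

lemma τ_unit (T : CategorifiedTrace M C) (w : M) :
    (T.τ w (𝟙_ M)).hom = T.Tr.map ((ρ_ w).hom ≫ (λ_ w).inv) := by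
  have h := T.traciator (𝟙_ M) w (𝟙_ M)
  have key : T.Tr.map (ρ_ (𝟙_ M ⊗ w)).hom ≫ (T.τ (𝟙_ M) w).hom =
      T.Tr.map ((λ_ w).hom ⊗ₘ 𝟙 (𝟙_ M)) ≫ (T.τ w (𝟙_ M)).hom ≫ (T.τ (𝟙_ M) w).hom := by
    have e := congrArg (· ≫ T.Tr.map (𝟙 w ⊗ₘ (λ_ (𝟙_ M)).hom)) h
    simp only [Category.assoc] at e
    calc T.Tr.map (ρ_ (𝟙_ M ⊗ w)).hom ≫ (T.τ (𝟙_ M) w).hom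
        = T.Tr.map (α_ (𝟙_ M) w (𝟙_ M)).hom ≫ T.Tr.map (𝟙 (𝟙_ M) ⊗ₘ (ρ_ w).hom) ≫
            (T.τ (𝟙_ M) w).hom := by
          rw [show (ρ_ (𝟙_ M ⊗ w)).hom =
            (α_ (𝟙_ M) w (𝟙_ M)).hom ≫ (𝟙 (𝟙_ M) ⊗ₘ (ρ_ w).hom) from by monoidal,
            T.Tr.map_comp, Category.assoc]
      _ = T.Tr.map (α_ (𝟙_ M) w (𝟙_ M)).hom ≫ (T.τ (𝟙_ M) (w ⊗ 𝟙_ M)).hom ≫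
            T.Tr.map ((ρ_ w).hom ⊗ₘ 𝟙 (𝟙_ M)) := by rw [T.naturality]
      _ = T.Tr.map (α_ (𝟙_ M) w (𝟙_ M)).hom ≫ (T.τ (𝟙_ M) (w ⊗ 𝟙_ M)).hom ≫
            T.Tr.map (α_ w (𝟙_ M) (𝟙_ M)).hom ≫ T.Tr.map (𝟙 w ⊗ₘ (λ_ (𝟙_ M)).hom) := by
          rw [show ((ρ_ w).hom ⊗ₘ 𝟙 (𝟙_ M)) =
            (α_ w (𝟙_ M) (𝟙_ M)).hom ≫ (𝟙 w ⊗ₘ (λ_ (𝟙_ M)).hom) from by monoidal,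
            T.Tr.map_comp]
      _ = (T.τ ((𝟙_ M) ⊗ w) (𝟙_ M)).hom ≫ T.Tr.map (α_ (𝟙_ M) (𝟙_ M) w).inv ≫
            (T.τ ((𝟙_ M) ⊗ (𝟙_ M)) w).hom ≫ T.Tr.map (𝟙 w ⊗ₘ (λ_ (𝟙_ M)).hom) := e
      _ = (T.τ ((𝟙_ M) ⊗ w) (𝟙_ M)).hom ≫ T.Tr.map (α_ (𝟙_ M) (𝟙_ M) w).inv ≫
            T.Tr.map ((λ_ (𝟙_ M)).hom ⊗ₘ 𝟙 w) ≫ (T.τ (𝟙_ M) w).hom := by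
          rw [T.naturality]
      _ = (T.τ ((𝟙_ M) ⊗ w) (𝟙_ M)).hom ≫
            T.Tr.map (𝟙 (𝟙_ M) ⊗ₘ (λ_ w).hom) ≫ (T.τ (𝟙_ M) w).hom := by
          rw [← Category.assoc (T.Tr.map (α_ (𝟙_ M) (𝟙_ M) w).inv), ← T.Tr.map_comp,
            show (α_ (𝟙_ M) (𝟙_ M) w).inv ≫ ((λ_ (𝟙_ M)).hom ⊗ₘ 𝟙 w) =
              (𝟙 (𝟙_ M) ⊗ₘ (λ_ w).hom) from by monoidal]
      _ = T.Tr.map ((λ_ w).hom ⊗ₘ 𝟙 (𝟙_ M)) ≫ (T.τ w (𝟙_ M)).hom ≫ (T.τ (𝟙_ M) w).hom := by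
          rw [← Category.assoc, ← T.naturality, Category.assoc]
  rw [← cancel_mono (T.τ (𝟙_ M) w).hom, ← cancel_epi (T.Tr.map ((λ_ w).hom ⊗ₘ 𝟙 (𝟙_ M))),
    ← key, ← Category.assoc, ← T.Tr.map_comp,
    show ((λ_ w).hom ⊗ₘ 𝟙 (𝟙_ M)) ≫ ((ρ_ w).hom ≫ (λ_ w).inv) = (ρ_ (𝟙_ M ⊗ w)).hom from by
      monoidal]

lemma τ_unit_inv (T : CategorifiedTrace M C) (w : M) :
    (T.τ w (𝟙_ M)).inv = T.Tr.map ((λ_ w).hom ≫ (ρ_ w).inv) := by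
  rw [← cancel_epi (T.τ w (𝟙_ M)).hom, Iso.hom_inv_id, T.τ_unit, ← T.Tr.map_comp]
  simp

end CategorifiedTrace

/-- For a dualizable object `x` (with right dual `xᘁ`, evaluation
`ε_ : xᘁ ⊗ x ⟶ 𝟙` and coevaluation `η_ : 𝟙 ⟶ x ⊗ xᘁ`), the traciator `τ_{y,xᘁ}`
equals `Tr(id ⊗ ev_x) ∘ τ⁻_{x, xᘁ⊗y⊗xᘁ} ∘ Tr(coev_x ⊗ id)`, where
`τ⁻_{x,w} = (τ_{w,x})⁻¹` and the indicated unitors and associators are inserted. -/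
theorem CategorifiedTrace.traciator_rightDual
    {M : Type*} [Category M] [MonoidalCategory M] {C : Type*} [Category C]
    (T : CategorifiedTrace M C) (x : M) [HasRightDual x] (y : M) :
    (T.τ y (xᘁ)).hom =
      T.Tr.map (λ_ (y ⊗ xᘁ)).inv ≫
      T.Tr.map ((η_ x (xᘁ)) ⊗ₘ 𝟙 (y ⊗ xᘁ)) ≫
      T.Tr.map (α_ x (xᘁ) (y ⊗ xᘁ)).hom ≫
      (T.τ ((xᘁ) ⊗ y ⊗ xᘁ) x).inv ≫
      T.Tr.map ((α_ (xᘁ) y (xᘁ)).inv ⊗ₘ 𝟙 x) ≫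
      T.Tr.map (α_ ((xᘁ) ⊗ y) (xᘁ) x).hom ≫
      T.Tr.map (𝟙 ((xᘁ) ⊗ y) ⊗ₘ (ε_ x (xᘁ))) ≫
      T.Tr.map (ρ_ ((xᘁ) ⊗ y)).hom := by
  have tr := T.traciator (y ⊗ xᘁ) x (xᘁ)
  have hBig : (T.τ ((xᘁ) ⊗ y ⊗ xᘁ) x).hom =
      T.Tr.map (α_ (xᘁ) (y ⊗ xᘁ) x).hom ≫ (T.τ ((y ⊗ xᘁ) ⊗ x) (xᘁ)).inv ≫
      T.Tr.map (α_ (y ⊗ xᘁ) x (xᘁ)).hom ≫ (T.τ (y ⊗ xᘁ) (x ⊗ xᘁ)).hom ≫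
      T.Tr.map (α_ x (xᘁ) (y ⊗ xᘁ)).hom := by
    rw [tr]
    simp
  have hinv : (T.τ ((xᘁ) ⊗ y ⊗ xᘁ) x).inv =
      T.Tr.map (α_ x (xᘁ) (y ⊗ xᘁ)).inv ≫ (T.τ (y ⊗ xᘁ) (x ⊗ xᘁ)).inv ≫
      T.Tr.map (α_ (y ⊗ xᘁ) x (xᘁ)).inv ≫ (T.τ ((y ⊗ xᘁ) ⊗ x) (xᘁ)).hom ≫
      T.Tr.map (α_ (xᘁ) (y ⊗ xᘁ) x).inv := by
    rw [← cancel_epi (T.τ ((xᘁ) ⊗ y ⊗ xᘁ) x).hom, Iso.hom_inv_id, hBig]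
    simp
  rw [hinv]
  simp only [Category.assoc, Iso.map_hom_inv_id_assoc]
  -- now merge the tail of five maps
  have tail : T.Tr.map (α_ (xᘁ) (y ⊗ xᘁ) x).inv ≫
      T.Tr.map ((α_ (xᘁ) y (xᘁ)).inv ⊗ₘ 𝟙 x) ≫
      T.Tr.map (α_ ((xᘁ) ⊗ y) (xᘁ) x).hom ≫
      T.Tr.map (𝟙 ((xᘁ) ⊗ y) ⊗ₘ (ε_ x (xᘁ))) ≫
      T.Tr.map (ρ_ ((xᘁ) ⊗ y)).hom =
      T.Tr.map (𝟙 (xᘁ) ⊗ₘ ((α_ y (xᘁ) x).hom ≫ (𝟙 y ⊗ₘ ε_ x (xᘁ)) ≫ (ρ_ y).hom)) := by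
    repeat rw [← T.Tr.map_comp]
    exact congrArg T.Tr.map (by monoidal)
  rw [tail]
  have hg := (T.naturality ((α_ y (xᘁ) x).hom ≫ (𝟙 y ⊗ₘ ε_ x (xᘁ)) ≫ (ρ_ y).hom)
    (𝟙 (xᘁ))).symm
  rw [hg]
  have hη := T.naturality_inv (𝟙 (y ⊗ xᘁ)) (η_ x (xᘁ))
  rw [reassoc_of% hη]
  rw [T.τ_unit_inv (y ⊗ xᘁ)]
  have front : T.Tr.map (λ_ (y ⊗ xᘁ)).inv ≫
      T.Tr.map ((λ_ (y ⊗ xᘁ)).hom ≫ (ρ_ (y ⊗ xᘁ)).inv) ≫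
      T.Tr.map (𝟙 (y ⊗ xᘁ) ⊗ₘ η_ x (xᘁ)) ≫
      T.Tr.map (α_ (y ⊗ xᘁ) x (xᘁ)).inv ≫
      T.Tr.map (((α_ y (xᘁ) x).hom ≫ (𝟙 y ⊗ₘ ε_ x (xᘁ)) ≫ (ρ_ y).hom) ⊗ₘ 𝟙 (xᘁ)) =
      𝟙 _ := by
    repeat rw [← T.Tr.map_comp]
    rw [show (λ_ (y ⊗ xᘁ)).inv ≫ ((λ_ (y ⊗ xᘁ)).hom ≫ (ρ_ (y ⊗ xᘁ)).inv) ≫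
        (𝟙 (y ⊗ xᘁ) ⊗ₘ η_ x (xᘁ)) ≫ (α_ (y ⊗ xᘁ) x (xᘁ)).inv ≫
        (((α_ y (xᘁ) x).hom ≫ (𝟙 y ⊗ₘ ε_ x (xᘁ)) ≫ (ρ_ y).hom) ⊗ₘ 𝟙 (xᘁ)) =
        𝟙 y ⊗ₘ ((ρ_ (xᘁ)).inv ≫ (𝟙 (xᘁ) ⊗ₘ η_ x (xᘁ)) ≫ (α_ (xᘁ) x (xᘁ)).inv ≫
          (ε_ x (xᘁ) ⊗ₘ 𝟙 (xᘁ)) ≫ (λ_ (xᘁ)).hom) from by monoidal]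
    rw [show (ρ_ (xᘁ)).inv ≫ (𝟙 (xᘁ) ⊗ₘ η_ x (xᘁ)) ≫ (α_ (xᘁ) x (xᘁ)).inv ≫
        (ε_ x (xᘁ) ⊗ₘ 𝟙 (xᘁ)) ≫ (λ_ (xᘁ)).hom = 𝟙 (xᘁ) from by
      simp only [id_tensorHom, tensorHom_id]
      rw [ExactPairing.coevaluation_evaluation_assoc]
      simp]
    simp
  rw [reassoc_of% front]
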